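/- (Theorem 1.) Let X be uniform on {0,1}, let R be a finite set with conditional pmf satisfying P(r|x) > 0 for all r ∈ R and x ∈ {0,1}, let d_c ≥ 2, let ε be admissible for d_c, and take φ = φ_c*. Let A = {a_1, …, a_{|A|}} be the set of distinct values of Φ on R^{d_c−1} labelled so that a_1 ≻ a_2 ≻ ⋯ ≻ a_{|A|}, and let S be a finite output alphabet. Assume the following fact about finite binary-input channels: for every finite set Y with conditional pmf P_{Y|X} and every enumeration y_1,…,y_N of Y satisfying P_{Y|X}(y_i|0)·P_{Y|X}(y_{i+1}|1) ≥ P_{Y|X}(y_{i+1}|0)·P_{Y|X}(y_i|1) for all i and in which elements with equal likelihood ratio are consecutive, the maximum of I(X; f(Y)) over all functions f : Y → S is attained by a quantizer that is sequential with respect to this enumeration and constant on each class of equal likelihood ratio. Then the maximum of I(X; f(R_1,…,R_{d_c−1})) over all functions f : R^{d_c−1} → S, where (R_1,…,R_{d_c−1}) has conditional pmf P_{d_c−1}(·|X), is attained by a function of the form Λ ∘ Φ, where Λ : A → S maps a_i to s exactly when λ_s < i ≤ λ_{s+1} for some integers 0 = λ_0 ≤ λ_1 ≤ ⋯ ≤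 λ_{|S|} = |A|. -/

import Mathlib

open scoped BigOperators Classical

/-- Check-node joint conditional pmf:
`P_d(r|x) = (1/2)^(d-1) · Σ_{b : parity b = x} Π_i P(r_i | b_i)`. -/
noncomputable def checkPmf {R : Type*} [Fintype R] (P : R → ZMod 2 → ℝ) (d : ℕ)
    (r : Fin d → R) (x : ZMod 2) : ℝ :=
  (1 / 2 : ℝ) ^ (d - 1) *
    ∑ b ∈ Finset.univ.filter (fun b : Fin d → ZMod 2 => ∑ i, b i = x),
      ∏ i, P (r i) (b i)

/-- `g(r) = (P(r|0) − P(r|1)) / (P(r|0) + P(r|1))`. -/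
noncomputable def gfun {R : Type*} (P : R → ZMod 2 → ℝ) (r : R) : ℝ :=
  (P r 0 - P r 1) / (P r 0 + P r 1)

/-- `g_d(r) = Π_{i=1}^d g(r_i)` for a tuple `r ∈ R^d`. -/
noncomputable def gProd {R : Type*} (P : R → ZMod 2 → ℝ) {d : ℕ} (r : Fin d → R) : ℝ :=
  ∏ i, gfun P (r i)

/-- The optimal check-node reconstruction function `φ_c*`. -/
noncomputable def phiStar {R : Type*} (P : R → ZMod 2 → ℝ) (ε : ℝ) (r : R) : ℝ :=
  if |gfun P r| = 1 then Real.sign (gfun P r) * ε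
  else if gfun P r = 0 then 0
  else -Real.sign (gfun P r) * Real.log |gfun P r|

/-- Combined check-node value:
`Φ(r) = (Π_i sgn(φ(r_i))) · Σ_i |φ(r_i)|`. -/
noncomputable def PhiC {R : Type*} (φ : R → ℝ) {d : ℕ} (r : Fin d → R) : ℝ :=
  (∏ i, Real.sign (φ (r i))) * ∑ i, |φ (r i)|

/-- `α ≻ β` iff `sgn α > sgn β`, or (`sgn α = sgn β` and `α < β`). -/
def rsucc (α β : ℝ) : Prop :=
  Real.sign β < Real.sign α ∨ (Real.sign α = Real.sign β ∧ α < β)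

/-- `ε` is admissible for `d_c`. -/
def admissible {R : Type*} [Fintype R] (P : R → ZMod 2 → ℝ) (dc : ℕ) (ε : ℝ) : Prop :=
  0 < ε * dc ∧
    ∀ r r' : Fin (dc - 1) → R,
      gProd P r ≠ gProd P r' →
      Real.sign (gProd P r) = Real.sign (gProd P r') →
      Real.sign (gProd P r) ≠ 0 →
      ε * dc < abs (Real.log |gProd P r| - Real.log |gProd P r'|)

/-- Joint pmf of `(X, f(Y))` where `X` is uniform on `{0,1}` and `Y` has
conditional pmf `W` given `X`: `p(x, z) = (1/2)·Σ_{y : f(y) = z} W(y|x)`. -/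
noncomputable def jointPmf {Y Z : Type*} [Fintype Y] (W : Y → ZMod 2 → ℝ)
    (f : Y → Z) (x : ZMod 2) (z : Z) : ℝ :=
  (1 / 2 : ℝ) * ∑ y ∈ Finset.univ.filter (fun y => f y = z), W y x

/-- Mutual information `I(X; f(Y))` for `X` uniform on `{0,1}` and `Y` with
conditional pmf `W` given `X`; terms with zero joint probability are `0`. -/
noncomputable def mutualInfo {Y Z : Type*} [Fintype Y] [Fintype Z]
    (W : Y → ZMod 2 → ℝ) (f : Y → Z) : ℝ :=
  ∑ x : ZMod 2, ∑ z : Z,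
    if jointPmf W f x z = 0 then 0
    else jointPmf W f x z *
      Real.log (jointPmf W f x z /
        ((1 / 2 : ℝ) * ∑ x' : ZMod 2, jointPmf W f x' z))


section AuxLemmas

private lemma rsign_mul (x y : ℝ) : Real.sign (x * y) = Real.sign x * Real.sign y := by
  rcases lt_trichotomy x 0 with hx | rfl | hx
  · rcases lt_trichotomy y 0 with hy | rfl | hy
    · rw [Real.sign_of_pos (mul_pos_of_neg_of_neg hx hy), Real.sign_of_neg hx,
        Real.sign_of_neg hy]; ring
    · simp
    · rw [Real.sign_of_neg (mul_neg_of_neg_of_pos hx hy), Real.sign_of_neg hx,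
        Real.sign_of_pos hy]; ring
  · simp
  · rcases lt_trichotomy y 0 with hy | rfl | hy
    · rw [Real.sign_of_neg (mul_neg_of_pos_of_neg hx hy), Real.sign_of_pos hx,
        Real.sign_of_neg hy]; ring
    · simp
    · rw [Real.sign_of_pos (mul_pos hx hy), Real.sign_of_pos hx,
        Real.sign_of_pos hy]; ring

private lemma rsign_prod {ι : Type*} (s : Finset ι) (f : ι → ℝ) :
    Real.sign (∏ i ∈ s, f i) = ∏ i ∈ s, Real.sign (f i) := by
  classical
  induction s using Finset.induction_on with
  | empty => simp [Real.sign_one]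
  | insert _ _ h ih => rw [Finset.prod_insert h, Finset.prod_insert h, rsign_mul, ih]

private noncomputable def psi (x : ZMod 2) : ℝ := if x = 0 then 1 else -1

private lemma psi_zero : psi 0 = 1 := by simp [psi]

private lemma psi_one : psi 1 = -1 := by
  simp [psi, show (1 : ZMod 2) ≠ 0 by decide]

private lemma zmod2_cases : ∀ x : ZMod 2, x = 0 ∨ x = 1 := by decide

private lemma psi_add (x y : ZMod 2) : psi (x + y) = psi x * psi y := by
  rcases zmod2_cases x with rfl | rfl <;> rcases zmod2_cases y with rfl | rfl <;>
    simp [psi_zero, psi_one, show (1 + 1 : ZMod 2) = 0 by decide]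

private lemma zmod2_sum (h : ZMod 2 → ℝ) : ∑ x : ZMod 2, h x = h 0 + h 1 := by
  have : (Finset.univ : Finset (ZMod 2)) = {0, 1} := by decide
  rw [this, Finset.sum_insert (by decide), Finset.sum_singleton]

private lemma psi_sum {ι : Type*} (s : Finset ι) (b : ι → ZMod 2) :
    psi (∑ i ∈ s, b i) = ∏ i ∈ s, psi (b i) := by
  classical
  induction s using Finset.induction_on with
  | empty => simp [psi_zero]
  | insert _ _ h ih => rw [Finset.sum_insert h, Finset.prod_insert h, psi_add, ih]

private lemma parity_sum (d : ℕ) (f : Fin d → ZMod 2 → ℝ) (x : ZMod 2) :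
    ∑ b ∈ Finset.univ.filter (fun b : Fin d → ZMod 2 => ∑ i, b i = x), ∏ i, f i (b i)
      = ((∏ i, (f i 0 + f i 1)) + psi x * ∏ i, (f i 0 - f i 1)) / 2 := by
  classical
  have h1 : ∑ b : Fin d → ZMod 2, ∏ i, f i (b i) = ∏ i, (f i 0 + f i 1) := by
    rw [← Fintype.prod_sum fun i (j : ZMod 2) => f i j]
    exact Finset.prod_congr rfl fun i _ => zmod2_sum fun j => f i j
  have h2 : ∑ b : Fin d → ZMod 2, psi (∑ i, b i) * ∏ i, f i (b i)
      = ∏ i, (f i 0 - f i 1) := by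
    have hterm : ∀ b : Fin d → ZMod 2,
        psi (∑ i, b i) * ∏ i, f i (b i) = ∏ i, (psi (b i) * f i (b i)) := fun b => by
      rw [psi_sum, Finset.prod_mul_distrib]
    rw [Finset.sum_congr rfl fun b _ => hterm b,
      ← Fintype.prod_sum fun i (j : ZMod 2) => psi j * f i j]
    refine Finset.prod_congr rfl fun i _ => ?_
    rw [zmod2_sum fun j => psi j * f i j, psi_zero, psi_one]; ring
  have hind : ∀ a : ZMod 2, (if a = x then (1 : ℝ) else 0) = (1 + psi x * psi a) / 2 := by
    intro a
    rcases zmod2_cases x with rfl | rfl <;> rcases zmod2_cases a with rfl | rfl  <;>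
      simp [psi_zero, psi_one, show (1 : ZMod 2) ≠ 0 by decide,
        show (0 : ZMod 2) ≠ 1 by decide]
  rw [Finset.sum_filter]
  have hsplit : ∀ b : Fin d → ZMod 2,
      (if (∑ i, b i) = x then ∏ i, f i (b i) else 0)
        = (∏ i, f i (b i)) / 2 + (psi x / 2) * (psi (∑ i, b i) * ∏ i, f i (b i)) := by
    intro b
    have : (if (∑ i, b i) = x then (1 : ℝ) else 0) * ∏ i, f i (b i)
        = (if (∑ i, b i) = x then ∏ i, f i (b i) else 0) := by
      split <;> simp
    rw [← this, hind (∑ i, b i)]; ring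
  rw [Finset.sum_congr rfl fun b _ => hsplit b, Finset.sum_add_distrib,
    ← Finset.sum_div, h1, ← Finset.mul_sum, h2]
  ring


private lemma abs_gfun_lt_one {R : Type*} (P : R → ZMod 2 → ℝ)
    (hpos : ∀ r x, 0 < P r x) (r : R) : |gfun P r| < 1 := by
  have h0 := hpos r 0
  have h1 := hpos r 1
  rw [gfun, abs_div, abs_of_pos (by linarith : (0:ℝ) < P r 0 + P r 1),
    div_lt_one (by linarith : (0:ℝ) < P r 0 + P r 1)]
  exact abs_lt.mpr ⟨by linarith, by linarith⟩

private lemma abs_gProd_lt_one {R : Type*} [Fintype R] (P : R → ZMod 2 → ℝ)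
    (hpos : ∀ r x, 0 < P r x) {d : ℕ} (hd : 1 ≤ d) (r : Fin d → R) :
    |gProd P r| < 1 := by
  have i0 : Fin d := ⟨0, hd⟩
  rw [gProd, Finset.abs_prod, ← Finset.mul_prod_erase _ _ (Finset.mem_univ i0)]
  have hrest : ∏ i ∈ Finset.univ.erase i0, |gfun P (r i)| ≤ 1 :=
    Finset.prod_le_one (fun i _ => abs_nonneg _)
      (fun i _ => (abs_gfun_lt_one P hpos (r i)).le)
  calc |gfun P (r i0)| * ∏ i ∈ Finset.univ.erase i0, |gfun P (r i)|
      ≤ |gfun P (r i0)| * 1 :=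
        mul_le_mul_of_nonneg_left hrest (abs_nonneg _)
    _ = |gfun P (r i0)| := mul_one _
    _ < 1 := abs_gfun_lt_one P hpos (r i0)

private lemma checkPmf_formula {R : Type*} [Fintype R] (P : R → ZMod 2 → ℝ)
    (hpos : ∀ r x, 0 < P r x) (d : ℕ) (r : Fin d → R) (x : ZMod 2) :
    checkPmf P d r x
      = ((1/2 : ℝ) ^ (d - 1) * ∏ i, (P (r i) 0 + P (r i) 1))
          * (1 + psi x * gProd P r) / 2 := by
  rw [checkPmf, parity_sum d (fun i => P (r i)) x]
  have hprod : ∏ i, (P (r i) 0 - P (r i) 1)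
      = (∏ i, (P (r i) 0 + P (r i) 1)) * gProd P r := by
    rw [gProd, ← Finset.prod_mul_distrib]
    refine Finset.prod_congr rfl fun i _ => ?_
    have h0 := hpos (r i) 0
    have h1 := hpos (r i) 1
    rw [gfun]
    field_simp
  rw [hprod]; ring

private lemma checkPmf_pos {R : Type*} [Fintype R] (P : R → ZMod 2 → ℝ)
    (hpos : ∀ r x, 0 < P r x) {d : ℕ} (hd : 1 ≤ d) (r : Fin d → R) (x : ZMod 2) :
    0 < checkPmf P d r x := by
  rw [checkPmf_formula P hpos d r x]
  have hT : 0 < (1/2 : ℝ) ^ (d - 1) * ∏ i, (P (r i) 0 + P (r i) 1) := by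
    apply mul_pos (by positivity)
    exact Finset.prod_pos fun i _ => by have := hpos (r i) 0; have := hpos (r i) 1; linarith
  have hG := abs_gProd_lt_one P hpos hd r
  have hpsi : psi x = 1 ∨ psi x = -1 := by
    rcases zmod2_cases x with rfl | rfl
    · exact Or.inl psi_zero
    · exact Or.inr psi_one
  have habs := abs_lt.mp hG
  have hfac : 0 < 1 + psi x * gProd P r := by
    rcases hpsi with h | h <;> rw [h] <;> nlinarith
  positivity

private lemma checkPmf_sum_one {R : Type*} [Fintype R] (P : R → ZMod 2 → ℝ)
    (hsum : ∀ x, ∑ r : R, P r x = 1) {d : ℕ} (hd : 1 ≤ d) (x : ZMod 2) :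
    ∑ r : Fin d → R, checkPmf P d r x = 1 := by
  classical
  unfold checkPmf
  rw [← Finset.mul_sum, Finset.sum_comm]
  have hinner : ∀ b : Fin d → ZMod 2,
      ∑ r : Fin d → R, ∏ i, P (r i) (b i) = 1 := by
    intro b
    rw [← Fintype.prod_sum fun (i : Fin d) (ρ : R) => P ρ (b i)]
    simp [hsum]
  rw [Finset.sum_congr rfl fun b _ => hinner b]
  have hcard := parity_sum d (fun _ _ => (1 : ℝ)) x
  simp only [Finset.prod_const, Finset.card_univ, Fintype.card_fin, one_pow] at hcard
  rw [hcard, show ((1:ℝ) - 1) = 0 by norm_num, zero_pow (by omega : d ≠ 0),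
    mul_zero, add_zero, show ((1:ℝ) + 1) = 2 by norm_num]
  obtain ⟨k, rfl⟩ : ∃ k, d = k + 1 := ⟨d - 1, by omega⟩
  have h2 : ((2:ℝ)) ^ (k + 1) / 2 = 2 ^ k := by rw [pow_succ]; ring
  rw [h2, Nat.add_sub_cancel, ← mul_pow]
  norm_num

private noncomputable def Ffun (t : ℝ) : ℝ := -Real.sign t * Real.log |t|

private lemma Ffun_zero : Ffun 0 = 0 := by simp [Ffun]

private lemma Ffun_pos_val {s : ℝ} (h0 : 0 < s) (h1 : s < 1) :
    Ffun s = -Real.log s ∧ 0 < Ffun s := by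
  have hlog := Real.log_neg h0 h1
  rw [Ffun, Real.sign_of_pos h0, abs_of_pos h0]
  constructor
  · ring
  · nlinarith

private lemma Ffun_neg_val {s : ℝ} (h0 : s < 0) (h1 : -1 < s) :
    Ffun s = Real.log (-s) ∧ Ffun s < 0 := by
  have hlog : Real.log (-s) < 0 := Real.log_neg (by linarith) (by linarith)
  rw [Ffun, Real.sign_of_neg h0, abs_of_neg h0]
  constructor
  · ring
  · nlinarith

private lemma rsucc_irrefl (a : ℝ) : ¬ rsucc a a := by
  rintro (h | ⟨-, h⟩) <;> exact lt_irrefl _ h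

private lemma rsucc_asymm {a b : ℝ} (h : rsucc a b) : ¬ rsucc b a := by
  rcases h with h | ⟨h1, h2⟩ <;> rintro (h' | ⟨h1', h2'⟩) <;> linarith

private lemma Ffun_strict {s t : ℝ} (hs : |s| < 1) (ht : |t| < 1) (h : t < s) :
    rsucc (Ffun s) (Ffun t) := by
  have hs' := abs_lt.mp hs
  have ht' := abs_lt.mp ht
  rcases lt_trichotomy s 0 with hs0 | rfl | hs0
  · -- s < 0, hence t < s < 0
    have ht0 : t < 0 := lt_trans h hs0
    obtain ⟨hsv, hsneg⟩ := Ffun_neg_val hs0 hs'.1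
    obtain ⟨htv, htneg⟩ := Ffun_neg_val ht0 ht'.1
    right
    refine ⟨by rw [Real.sign_of_neg hsneg, Real.sign_of_neg htneg], ?_⟩
    rw [hsv, htv]
    exact Real.log_lt_log (by linarith) (by linarith)
  · -- s = 0, t < 0
    obtain ⟨htv, htneg⟩ := Ffun_neg_val h ht'.1
    left
    rw [Ffun_zero, Real.sign_zero, Real.sign_of_neg htneg]
    norm_num
  · rcases lt_trichotomy t 0 with ht0 | rfl | ht0
    · -- s > 0 > t
      obtain ⟨-, hspos⟩ := Ffun_pos_val hs0 hs'.2
      obtain ⟨-, htneg⟩ := Ffun_neg_val ht0 ht'.1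
      left
      rw [Real.sign_of_pos hspos, Real.sign_of_neg htneg]
      norm_num
    · -- s > 0 = t
      obtain ⟨-, hspos⟩ := Ffun_pos_val hs0 hs'.2
      left
      rw [Ffun_zero, Real.sign_zero, Real.sign_of_pos hspos]
      norm_num
    · -- 0 < t < s
      obtain ⟨hsv, hspos⟩ := Ffun_pos_val hs0 hs'.2
      obtain ⟨htv, htpos⟩ := Ffun_pos_val ht0 ht'.2
      right
      refine ⟨by rw [Real.sign_of_pos hspos, Real.sign_of_pos htpos], ?_⟩
      rw [hsv, htv]
      have := Real.log_lt_log ht0 h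
      linarith

private lemma Ffun_lt_of_rsucc {s t : ℝ} (hs : |s| < 1) (ht : |t| < 1)
    (h : rsucc (Ffun s) (Ffun t)) : t < s := by
  rcases lt_trichotomy t s with h' | h' | h'
  · exact h'
  · rw [h'] at h; exact absurd h (rsucc_irrefl _)
  · exact absurd (Ffun_strict ht hs h') (rsucc_asymm h)

private lemma Ffun_inj {s t : ℝ} (hs : |s| < 1) (ht : |t| < 1)
    (h : Ffun s = Ffun t) : s = t := by
  rcases lt_trichotomy s t with h' | h' | h'
  · have := Ffun_strict ht hs h'
    rw [h] at this
    exact absurd this (rsucc_irrefl _)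
  · exact h'
  · have := Ffun_strict hs ht h'
    rw [h] at this
    exact absurd this (rsucc_irrefl _)

private lemma phiStar_eq_Ffun {R : Type*} (P : R → ZMod 2 → ℝ) (ε : ℝ) (r : R)
    (h : |gfun P r| ≠ 1) : phiStar P ε r = Ffun (gfun P r) := by
  rw [phiStar, if_neg h]
  split
  · next h0 => rw [h0, Ffun_zero]
  · rfl

private lemma sign_Ffun {s : ℝ} (hs : |s| < 1) : Real.sign (Ffun s) = Real.sign s := by
  have hs' := abs_lt.mp hs
  rcases lt_trichotomy s 0 with h0 | rfl | h0
  · obtain ⟨-, hneg⟩ := Ffun_neg_val h0 hs'.1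
    rw [Real.sign_of_neg hneg, Real.sign_of_neg h0]
  · rw [Ffun_zero]
  · obtain ⟨-, hpos⟩ := Ffun_pos_val h0 hs'.2
    rw [Real.sign_of_pos hpos, Real.sign_of_pos h0]

private lemma abs_Ffun {s : ℝ} (hs : |s| < 1) (h0 : s ≠ 0) :
    |Ffun s| = -Real.log |s| := by
  have habs : 0 < |s| := abs_pos.mpr h0
  have h1 : |s| < 1 := hs
  have hlog : Real.log |s| < 0 := Real.log_neg habs h1
  have hsgn : Real.sign s = 1 ∨ Real.sign s = -1 := by
    rcases lt_trichotomy s 0 with h | h | h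
    · exact Or.inr (Real.sign_of_neg h)
    · exact absurd h h0
    · exact Or.inl (Real.sign_of_pos h)
  rcases hsgn with h | h <;> rw [Ffun, h] <;>
    [skip; rw [show -(-1 : ℝ) * Real.log |s| = Real.log |s| by ring]] <;>
    first
      | (rw [show -(1:ℝ) * Real.log |s| = -Real.log |s| by ring,
          abs_of_pos (by linarith)])
      | rw [abs_of_neg (by linarith)]

private lemma PhiC_eq_Ffun {R : Type*} [Fintype R] (P : R → ZMod 2 → ℝ)
    (hpos : ∀ r x, 0 < P r x) (ε : ℝ) {d : ℕ} (r : Fin d → R) :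
    PhiC (phiStar P ε) r = Ffun (gProd P r) := by
  classical
  have hlt : ∀ i, |gfun P (r i)| < 1 := fun i => abs_gfun_lt_one P hpos (r i)
  have hphi : ∀ i, phiStar P ε (r i) = Ffun (gfun P (r i)) :=
    fun i => phiStar_eq_Ffun P ε (r i) (ne_of_lt (hlt i))
  by_cases hz : ∃ i, gfun P (r i) = 0
  · obtain ⟨i0, hi0⟩ := hz
    have hG : gProd P r = 0 := Finset.prod_eq_zero (Finset.mem_univ i0) hi0
    have hsgn0 : Real.sign (phiStar P ε (r i0)) = 0 := by
      rw [hphi i0, hi0, Ffun_zero, Real.sign_zero]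
    rw [PhiC, Finset.prod_eq_zero (Finset.mem_univ i0) hsgn0, hG, Ffun_zero,
      zero_mul]
  · push_neg at hz
    have h1 : (∏ i, Real.sign (phiStar P ε (r i))) = Real.sign (gProd P r) := by
      rw [gProd, rsign_prod]
      exact Finset.prod_congr rfl fun i _ => by rw [hphi i, sign_Ffun (hlt i)]
    have h2 : ∑ i, |phiStar P ε (r i)| = -Real.log |gProd P r| := by
      have : ∀ i, |phiStar P ε (r i)| = -Real.log |gfun P (r i)| :=
        fun i => by rw [hphi i]; exact abs_Ffun (hlt i) (hz i)
      rw [Finset.sum_congr rfl fun i _ => this i, Finset.sum_neg_distrib]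
      rw [neg_inj, ← Real.log_prod (fun i _ => abs_ne_zero.mpr (hz i)), gProd,
        Finset.abs_prod]
    rw [PhiC, h1, h2, Ffun]
    ring

private lemma mutualInfo_reindex {Y Z : Type*} [Fintype Y] [Fintype Z] {N : ℕ}
    (e : Fin N ≃ Y) (W : Y → ZMod 2 → ℝ) (f : Y → Z) :
    mutualInfo W f = mutualInfo (fun i => W (e i)) (fun i => f (e i)) := by
  classical
  have hj : ∀ x z, jointPmf W f x z = jointPmf (fun i => W (e i)) (fun i => f (e i)) x z := by
    intro x z
    unfold jointPmf
    congr 1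
    exact (Finset.sum_equiv e (by simp) (by simp)).symm
  unfold mutualInfo
  simp only [hj]

private lemma lr_eq_iff {A B G G' : ℝ} (hA : 0 < A) (hB : 0 < B) :
    A * (1 + 1 * G) / 2 * (B * (1 + -1 * G') / 2)
      = B * (1 + 1 * G') / 2 * (A * (1 + -1 * G) / 2) ↔ G = G' := by
  constructor
  · intro h
    have h2 : A * B * (G - G') = 0 := by linear_combination 2 * h
    rcases mul_eq_zero.mp h2 with h3 | h3
    · exact absurd h3 (mul_pos hA hB).ne'
    · linarith
  · intro h; rw [h]; ring

private lemma lr_ge {A B G G' : ℝ} (hA : 0 < A) (hB : 0 < B) (h : G' ≤ G) :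
    A * (1 + 1 * G) / 2 * (B * (1 + -1 * G') / 2)
      ≥ B * (1 + 1 * G') / 2 * (A * (1 + -1 * G) / 2) := by
  nlinarith [mul_nonneg (mul_pos hA hB).le (sub_nonneg.mpr h)]

private noncomputable def quantOf {N M : ℕ} (hM : 1 ≤ M) (g : Fin N → ℝ)
    (Q : Fin N → Fin M) : ℝ → Fin M :=
  fun a => if h : ∃ i, g i = a then Q h.choose else ⟨0, hM⟩

private lemma quantOf_eq {N M : ℕ} (hM : 1 ≤ M) (g : Fin N → ℝ) (Q : Fin N → Fin M)
    (hconst : ∀ i j, g i = g j → Q i = Q j) (i : Fin N) :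
    quantOf hM g Q (g i) = Q i := by
  have hex : ∃ j, g j = g i := ⟨i, rfl⟩
  rw [quantOf, dif_pos hex]
  exact hconst _ _ hex.choose_spec


/-- Theorem 1: with `φ = φ_c*` and an admissible `ε`, the maximum of
`I(X; f(R_1,…,R_{d_c−1}))` over all `f : R^{d_c−1} → S` (with
`S = {0,…,M−1}`) is attained by a function of the form `Λ ∘ Φ` where `Λ` is a
sequential (threshold) quantizer with respect to the `≻`-ordering of the
values of `Φ`. The hypothesis `hfact` is the assumed fact about optimal
sequential quantization of finite binary-input channels whose outputs are
enumerated in decreasing likelihood-ratio order with equal-ratio elements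
consecutive. -/
theorem stmt_6 {R : Type*} [Fintype R] [Nonempty R] (P : R → ZMod 2 → ℝ)
    (hpos : ∀ r x, 0 < P r x) (hsum : ∀ x, ∑ r : R, P r x = 1)
    (dc : ℕ) (hdc : 2 ≤ dc) (ε : ℝ) (hε : admissible P dc ε)
    (M : ℕ) (hM : 1 ≤ M)
    (hfact : ∀ (N : ℕ) (W : Fin N → ZMod 2 → ℝ),
      (∀ y x, 0 ≤ W y x) → (∀ x, ∑ y : Fin N, W y x = 1) →
      -- the enumeration is sorted by decreasing likelihood ratio
      (∀ (i : ℕ) (h : i + 1 < N),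
        W ⟨i, Nat.lt_of_succ_lt h⟩ 0 * W ⟨i + 1, h⟩ 1 ≥
          W ⟨i + 1, h⟩ 0 * W ⟨i, Nat.lt_of_succ_lt h⟩ 1) →
      -- elements with equal likelihood ratio are consecutive
      (∀ i j k : Fin N, i ≤ j → j ≤ k →
        W i 0 * W k 1 = W k 0 * W i 1 → W i 0 * W j 1 = W j 0 * W i 1) →
      ∃ Q : Fin N → Fin M, Monotone Q ∧
        (∀ i j : Fin N, W i 0 * W j 1 = W j 0 * W i 1 → Q i = Q j) ∧
        ∀ f : Fin N → Fin M, mutualInfo W f ≤ mutualInfo W Q) :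
    ∃ Λ : ℝ → Fin M,
      -- `Λ` is sequential w.r.t. the labelling `a_1 ≻ a_2 ≻ ⋯ ≻ a_{|A|}` of the
      -- distinct values of `Φ` on `R^{d_c−1}`
      (∀ a b : ℝ, (∃ r : Fin (dc - 1) → R, PhiC (phiStar P ε) r = a) →
        (∃ r : Fin (dc - 1) → R, PhiC (phiStar P ε) r = b) →
        rsucc a b → Λ a ≤ Λ b) ∧
      -- and `Λ ∘ Φ` attains the maximal mutual information
      ∀ f : (Fin (dc - 1) → R) → Fin M,
        mutualInfo (checkPmf P (dc - 1)) f ≤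
          mutualInfo (checkPmf P (dc - 1))
            (fun r => Λ (PhiC (phiStar P ε) r)) := by
  classical
  set d := dc - 1 with hddef
  have hd1 : 1 ≤ d := by omega
  have hGlt : ∀ r : Fin d → R, |gProd P r| < 1 :=
    fun r => abs_gProd_lt_one P hpos hd1 r
  have hT : ∀ r : Fin d → R, 0 < (1/2 : ℝ) ^ (d - 1) * ∏ i, (P (r i) 0 + P (r i) 1) := by
    intro r
    apply mul_pos (by positivity)
    exact Finset.prod_pos fun i _ => by
      have := hpos (r i) 0; have := hpos (r i) 1; linarith
  have hLR_eq : ∀ r r' : Fin d → R,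
      checkPmf P d r 0 * checkPmf P d r' 1 = checkPmf P d r' 0 * checkPmf P d r 1
        ↔ gProd P r = gProd P r' := by
    intro r r'
    rw [checkPmf_formula P hpos d r 0, checkPmf_formula P hpos d r' 1,
      checkPmf_formula P hpos d r' 0, checkPmf_formula P hpos d r 1,
      psi_zero, psi_one]
    exact lr_eq_iff (hT r) (hT r')
  have hLR_ge : ∀ r r' : Fin d → R, gProd P r' ≤ gProd P r →
      checkPmf P d r 0 * checkPmf P d r' 1 ≥ checkPmf P d r' 0 * checkPmf P d r 1 := by
    intro r r' h
    rw [checkPmf_formula P hpos d r 0, checkPmf_formula P hpos d r' 1,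
      checkPmf_formula P hpos d r' 0, checkPmf_formula P hpos d r 1,
      psi_zero, psi_one]
    exact lr_ge (hT r) (hT r') h
  -- sorted enumeration
  obtain ⟨e, hanti⟩ : ∃ e : Fin (Fintype.card (Fin d → R)) ≃ (Fin d → R),
      ∀ i j, i ≤ j → gProd P (e j) ≤ gProd P (e i) := by
    set e0 : Fin (Fintype.card (Fin d → R)) ≃ (Fin d → R) :=
      (Fintype.equivFin (Fin d → R)).symm with he0
    refine ⟨(Tuple.sort fun i => -(gProd P (e0 i))).trans e0, fun i j hij => ?_⟩
    have h := Tuple.monotone_sort (fun i => -(gProd P (e0 i))) hij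
    simp only [Function.comp_apply] at h
    rw [Equiv.trans_apply, Equiv.trans_apply]
    linarith [h]
  obtain ⟨Q, hQmono, hQconst, hQopt⟩ :=
    hfact (Fintype.card (Fin d → R)) (fun i => checkPmf P d (e i))
      (fun i x => (checkPmf_pos P hpos hd1 (e i) x).le)
      (fun x => by
        rw [Equiv.sum_comp e (fun r => checkPmf P d r x)]
        exact checkPmf_sum_one P hsum hd1 x)
      (fun i h => hLR_ge _ _ (hanti ⟨i, Nat.lt_of_succ_lt h⟩ ⟨i + 1, h⟩
        (by simp [Fin.mk_le_mk])))
      (fun i j k hij hjk heq => by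
        have hik : gProd P (e i) = gProd P (e k) := (hLR_eq (e i) (e k)).mp heq
        have h1 := hanti i j hij
        have h2 := hanti j k hjk
        exact (hLR_eq (e i) (e j)).mpr (by linarith))
  -- the quantizer
  have hΦ : ∀ r : Fin d → R, PhiC (phiStar P ε) r = Ffun (gProd P r) :=
    fun r => PhiC_eq_Ffun P hpos ε r
  have hconst : ∀ i j, PhiC (phiStar P ε) (e i) = PhiC (phiStar P ε) (e j) → Q i = Q j := by
    intro i j h
    rw [hΦ, hΦ] at h
    exact hQconst i j ((hLR_eq (e i) (e j)).mpr (Ffun_inj (hGlt _) (hGlt _) h))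
  refine ⟨quantOf hM (fun i => PhiC (phiStar P ε) (e i)) Q, ?_, ?_⟩
  · rintro a b ⟨r, rfl⟩ ⟨r', rfl⟩ hab
    have hlt : gProd P r' < gProd P r := by
      rw [hΦ r, hΦ r'] at hab
      exact Ffun_lt_of_rsucc (hGlt r) (hGlt r') hab
    have h1 : quantOf hM (fun i => PhiC (phiStar P ε) (e i)) Q (PhiC (phiStar P ε) r)
        = Q (e.symm r) := by
      have := quantOf_eq hM (fun i => PhiC (phiStar P ε) (e i)) Q hconst (e.symm r)
      rwa [Equiv.apply_symm_apply] at this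
    have h2 : quantOf hM (fun i => PhiC (phiStar P ε) (e i)) Q (PhiC (phiStar P ε) r')
        = Q (e.symm r') := by
      have := quantOf_eq hM (fun i => PhiC (phiStar P ε) (e i)) Q hconst (e.symm r')
      rwa [Equiv.apply_symm_apply] at this
    rw [h1, h2]
    rcases le_or_gt (e.symm r) (e.symm r') with hle | hgt
    · exact hQmono hle
    · exfalso
      have := hanti (e.symm r') (e.symm r) hgt.le
      rw [Equiv.apply_symm_apply, Equiv.apply_symm_apply] at this
      linarith
  · intro f
    have hΛQ : (fun i => quantOf hM (fun j => PhiC (phiStar P ε) (e j)) Q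
        (PhiC (phiStar P ε) (e i))) = Q :=
      funext fun i => quantOf_eq hM (fun j => PhiC (phiStar P ε) (e j)) Q hconst i
    calc mutualInfo (checkPmf P d) f
        = mutualInfo (fun i => checkPmf P d (e i)) (fun i => f (e i)) :=
          mutualInfo_reindex e (checkPmf P d) f
      _ ≤ mutualInfo (fun i => checkPmf P d (e i)) Q := hQopt _
      _ = mutualInfo (fun i => checkPmf P d (e i))
            (fun i => quantOf hM (fun j => PhiC (phiStar P ε) (e j)) Q
              (PhiC (phiStar P ε) (e i))) := by rw [hΛQ]
      _ = mutualInfo (checkPmf P d)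
            (fun r => quantOf hM (fun j => PhiC (phiStar P ε) (e j)) Q
              (PhiC (phiStar P ε) r)) :=
          (mutualInfo_reindex e (checkPmf P d)
            (fun r => quantOf hM (fun j => PhiC (phiStar P ε) (e j)) Q
              (PhiC (phiStar P ε) r))).symm


end AuxLemmas
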